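/- arXiv:1612.04354 — 3 statements merged into one kernel-verified Lean document; each statement's English description precedes it below -/
import Mathlib

section
/- Conversely, for the multinomial sampling scheme: if there exists a vector-valued family (b_i)_{i=1}^r in R^r such that for all compositions x = (x_1,...,x_r) of nonnegative reals with T = Σ x_i > 0 one has Σ_{k∈Δ} a_k · C(m;k) · x^k / T^m = (1/T) Σ_{i=1}^r x_i b_i, then necessarily b_i = a_{m·e_i} and a_k = Σ_{i=1}^r (k_i/m) a_{m·e_i} for all k ∈ Δ. -/
open MvPolynomial Finset Nat

section auxStmt6

lemma aux_mono {r : ℕ} (c : ℝ) (k : Fin r → ℕ) :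
    MvPolynomial.C c * ∏ i, MvPolynomial.X i ^ k i
      = MvPolynomial.monomial (Finsupp.equivFunOnFinite.symm k) c := by
  rw [MvPolynomial.monomial_eq]
  congr 1
  rw [Finsupp.prod]
  refine (Finset.prod_subset (Finset.subset_univ _) ?_).symm
  intro i _ hi
  have : k i = 0 := Finsupp.notMem_support_iff.mp hi
  simp [this]

lemma aux_coeff_pow {r n : ℕ} (d : Fin r →₀ ℕ) :
    MvPolynomial.coeff d ((∑ i, MvPolynomial.X i : MvPolynomial (Fin r) ℝ) ^ n)
      = if ∑ i, d i = n then (Nat.multinomial Finset.univ d : ℝ) else 0 := by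
  rw [Finset.sum_pow_eq_sum_piAntidiag]
  have hterm : ∀ l : Fin r → ℕ,
      ((Nat.multinomial Finset.univ l : MvPolynomial (Fin r) ℝ)) * ∏ i, MvPolynomial.X i ^ l i
        = MvPolynomial.monomial (Finsupp.equivFunOnFinite.symm l)
            ((Nat.multinomial Finset.univ l : ℝ)) := by
    intro l
    rw [← aux_mono]
    norm_cast
  simp_rw [hterm, MvPolynomial.coeff_sum, MvPolynomial.coeff_monomial]
  by_cases hd : ∑ i, d i = n
  · rw [if_pos hd]
    rw [Finset.sum_eq_single (⇑d)]
    · simp [Finsupp.equivFunOnFinite_symm_coe]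
    · intro l hl hne
      rw [if_neg]
      intro hc
      exact hne ((by simpa using congrArg (Finsupp.equivFunOnFinite) hc : l = Finsupp.equivFunOnFinite d))
    · intro hd2
      exact absurd (by simpa using hd) (by simpa [Finset.mem_piAntidiag] using hd2)
  · rw [if_neg hd]
    apply Finset.sum_eq_zero
    intro l hl
    rw [if_neg]
    intro hc
    apply hd
    have hl' : ∑ i, l i = n := by simpa [Finset.mem_piAntidiag] using hl
    have : l = ⇑d := (by simpa using congrArg (Finsupp.equivFunOnFinite) hc : l = Finsupp.equivFunOnFinite d)
    rw [← this]; exact hl'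

lemma aux_mult_rec {r : ℕ} (k : Fin r → ℕ) (i : Fin r) (hi : k i ≠ 0) :
    (∑ j, k j) * Nat.multinomial Finset.univ (Function.update k i (k i - 1))
      = k i * Nat.multinomial Finset.univ k := by
  set g := Function.update k i (k i - 1) with hg
  have hmem : i ∈ (Finset.univ : Finset (Fin r)) := Finset.mem_univ i
  have hprodg : ∏ j, (g j)! = (k i - 1)! * ∏ j ∈ Finset.univ.erase i, (k j)! := by
    rw [← Finset.mul_prod_erase _ _ hmem]
    congr 1
    · simp [hg]
    · exact Finset.prod_congr rfl fun j hj => by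
        simp [hg, Function.update_of_ne (Finset.mem_erase.mp hj).1]
  have hprodk : ∏ j, (k j)! = (k i)! * ∏ j ∈ Finset.univ.erase i, (k j)! := by
    rw [← Finset.mul_prod_erase _ _ hmem]
  have hsumg : ∑ j, g j = (∑ j, k j) - 1 := by
    rw [← Finset.add_sum_erase _ _ hmem, ← Finset.add_sum_erase _ k hmem]
    have : g i = k i - 1 := by simp [hg]
    rw [this]
    have : ∑ j ∈ Finset.univ.erase i, g j = ∑ j ∈ Finset.univ.erase i, k j :=
      Finset.sum_congr rfl fun j hj => by
        simp [hg, Function.update_of_ne (Finset.mem_erase.mp hj).1]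
    omega
  have hsum_pos : 1 ≤ ∑ j, k j := by
    calc 1 ≤ k i := Nat.one_le_iff_ne_zero.mpr hi
    _ ≤ ∑ j, k j := Finset.single_le_sum (fun j _ => Nat.zero_le _) hmem
  have hspec_g := Nat.multinomial_spec Finset.univ g
  have hspec_k := Nat.multinomial_spec Finset.univ k
  have hP : 0 < ∏ j, (g j)! := Finset.prod_pos fun j _ => Nat.factorial_pos _
  apply Nat.eq_of_mul_eq_mul_right hP
  have e1 : (∑ j, k j) * Nat.multinomial Finset.univ g * ∏ j, (g j)!
      = (∑ j, k j) * ((∑ j, k j) - 1)! := by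
    rw [mul_assoc, mul_comm (Nat.multinomial _ _), hspec_g, hsumg]
  have e2 : k i * Nat.multinomial Finset.univ k * ∏ j, (g j)!
      = (∑ j, k j)! := by
    rw [hprodg, ← mul_assoc, mul_comm (k i) (Nat.multinomial Finset.univ k), mul_assoc,
      mul_assoc]
    have hx : k i * ((k i - 1)! * ∏ j ∈ Finset.univ.erase i, (k j)!) = ∏ j, (k j)! := by
      rw [hprodk, ← mul_assoc, Nat.mul_factorial_pred hi]
    rw [hx, mul_comm, hspec_k]
  rw [e1, e2]
  rw [← Nat.succ_pred_eq_of_pos hsum_pos, Nat.factorial_succ]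
  simp [Nat.succ_pred_eq_of_pos hsum_pos]

lemma aux_vanish {r : ℕ} (Φ : MvPolynomial (Fin r) ℝ)
    (h : ∀ x : Fin r → ℝ, (∀ i, 0 ≤ x i) → MvPolynomial.eval x Φ = 0) : Φ = 0 := by
  have key : ∀ (v : Fin r →₀ ℕ) (c : ℝ),
      MvPolynomial.bind₁ (fun i : Fin r => (MvPolynomial.X i : MvPolynomial (Fin r) ℝ) ^ 2)
        (MvPolynomial.monomial v c) = MvPolynomial.monomial (2 • v) c := by
    intro v c
    rw [MvPolynomial.bind₁_monomial, MvPolynomial.monomial_eq, Finsupp.prod]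
    have hsupp : (2 • v).support = v.support := Finsupp.support_smul_eq two_ne_zero
    rw [hsupp]
    congr 1
    refine Finset.prod_congr rfl fun j _ => ?_
    rw [← pow_mul, Finsupp.smul_apply, smul_eq_mul]
  have hb : MvPolynomial.bind₁ (fun i : Fin r => (MvPolynomial.X i : MvPolynomial (Fin r) ℝ) ^ 2) Φ = 0 := by
    apply MvPolynomial.funext
    intro x
    have hae : ∀ (f : Fin r → ℝ) (p : MvPolynomial (Fin r) ℝ),
        MvPolynomial.aeval f p = MvPolynomial.eval f p := fun f p => by
      rw [MvPolynomial.aeval_eq_eval₂Hom]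
      rfl
    have hab := MvPolynomial.aeval_bind₁ (R := ℝ) x
      (fun i : Fin r => (MvPolynomial.X i : MvPolynomial (Fin r) ℝ) ^ 2) Φ
    simp only [hae, MvPolynomial.eval_pow, MvPolynomial.eval_X] at hab
    rw [hab, h _ (fun i => sq_nonneg (x i))]
    simp
  ext d
  have h2 : MvPolynomial.coeff (2 • d) (MvPolynomial.bind₁
      (fun i : Fin r => (MvPolynomial.X i : MvPolynomial (Fin r) ℝ) ^ 2) Φ) = MvPolynomial.coeff d Φ := by
    conv_lhs => rw [Φ.as_sum, map_sum]
    simp_rw [key, MvPolynomial.coeff_sum, MvPolynomial.coeff_monomial]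
    by_cases hd : d ∈ Φ.support
    · rw [Finset.sum_eq_single d]
      · simp
      · intro v hv hne
        rw [if_neg]
        intro hc
        apply hne
        ext j
        have := DFunLike.congr_fun hc j
        simp only [Finsupp.smul_apply, smul_eq_mul] at this
        omega
      · intro h; exact absurd hd h
    · rw [MvPolynomial.notMem_support_iff.mp hd]
      apply Finset.sum_eq_zero
      intro v hv
      rw [if_neg]
      intro hc
      have : v = d := by
        ext j
        have := DFunLike.congr_fun hc j
        simp only [Finsupp.smul_apply, smul_eq_mul] at this
        omega
      exact hd (this ▸ hv)
  rw [hb] at h2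
  simpa using h2.symm

lemma aux_mult_single {r m : ℕ} (i : Fin r) :
    Nat.multinomial Finset.univ (Pi.single i m : Fin r → ℕ) = 1 := by
  have hs : ∑ j, (Pi.single i m : Fin r → ℕ) j = m := by simp [Finset.sum_pi_single']
  have hp : ∏ j, ((Pi.single i m : Fin r → ℕ) j)! = m ! := by
    have : ∀ j, ((Pi.single i m : Fin r → ℕ) j)! = if j = i then m ! else 1 := by
      intro j
      by_cases hj : j = i <;> simp [hj, Pi.single_apply]
    simp only [this]
    simp
  have hsp := Nat.multinomial_spec Finset.univ (Pi.single i m : Fin r → ℕ)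
  rw [hp, hs] at hsp
  have hpos := Nat.factorial_pos m
  apply Nat.eq_of_mul_eq_mul_left hpos
  rw [hsp, mul_one]

lemma aux_single_mem {r m : ℕ} (i : Fin r) :
    Pi.single i m ∈ Finset.Nat.antidiagonalTuple r m := by
  rw [Finset.Nat.mem_antidiagonalTuple]
  simp [Finset.sum_pi_single']

theorem aux_part1_stmt6 (r m : ℕ) (hr : 0 < r) (hm : 0 < m)
    (a : (Fin r → ℕ) → Fin r → ℝ) (b : Fin r → Fin r → ℝ)
    (h : ∀ x : Fin r → ℝ, (∀ i, 0 ≤ x i) → 0 < ∑ i, x i → ∀ j,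
      ∑ k ∈ Finset.Nat.antidiagonalTuple r m,
        a k j * ((Nat.multinomial Finset.univ k : ℝ) * (∏ i, x i ^ k i) / (∑ i, x i) ^ m)
        = (1 / ∑ i, x i) * ∑ i, x i * b i j) :
    ∀ i, b i = a (Pi.single i m) := by
  intro i
  funext j
  have hx0 : ∀ l, (0:ℝ) ≤ (Pi.single i (1:ℝ) : Fin r → ℝ) l := fun l => by
    rw [Pi.single_apply]
    split <;> norm_num
  have hxs : ∑ l, (Pi.single i (1:ℝ) : Fin r → ℝ) l = 1 := by simp [Finset.sum_pi_single']
  have hh := h ((Pi.single i (1:ℝ) : Fin r → ℝ)) hx0 (by rw [hxs]; norm_num) j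
  rw [hxs] at hh
  have hprod : ∀ k ∈ Finset.Nat.antidiagonalTuple r m,
      (∏ l, ((Pi.single i (1:ℝ) : Fin r → ℝ) l) ^ k l) = if k = Pi.single i m then 1 else 0 := by
    intro k hk
    by_cases hks : k = Pi.single i m
    · subst hks
      rw [if_pos rfl]
      apply Finset.prod_eq_one
      intro l _
      by_cases hl : l = i <;> simp [hl, Pi.single_apply]
    · rw [if_neg hks]
      have : ∃ l, l ≠ i ∧ k l ≠ 0 := by
        by_contra hc
        push_neg at hc
        apply hks
        funext l
        by_cases hl : l = i
        · subst hl
          have hsum := Finset.Nat.mem_antidiagonalTuple.mp hk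
          have : ∀ l', l' ≠ l → k l' = 0 := hc
          have : ∑ l', k l' = k l := by
            rw [Finset.sum_eq_single l]
            · exact fun l' _ hl' => hc l' hl'
            · exact fun hl => absurd (Finset.mem_univ l) hl
          simp [Pi.single_apply]
          omega
        · simp [Pi.single_apply, hl, hc l hl]
      obtain ⟨l, hl, hkl⟩ := this
      apply Finset.prod_eq_zero (Finset.mem_univ l)
      rw [Pi.single_apply, if_neg hl]
      exact zero_pow hkl
  calc b i j = ∑ l, (Pi.single i (1:ℝ) : Fin r → ℝ) l * b l j := by
        have hterm : ∀ l, (Pi.single i (1:ℝ) : Fin r → ℝ) l * b l j = if l = i then b l j else 0 := by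
          intro l
          by_cases hl : l = i <;> simp [hl, Pi.single_apply]
        simp only [hterm]
        simp
    _ = ∑ k ∈ Finset.Nat.antidiagonalTuple r m,
        a k j * ((Nat.multinomial Finset.univ k : ℝ) * (∏ l, ((Pi.single i (1:ℝ) : Fin r → ℝ) l) ^ k l) / 1 ^ m) := by
        rw [hh]; ring
    _ = a (Pi.single i m) j := by
        rw [Finset.sum_congr rfl (fun k hk => by rw [hprod k hk])]
        rw [Finset.sum_eq_single (Pi.single i m)]
        · rw [if_pos rfl, aux_mult_single]
          norm_num
        · intro k hk hne
          rw [if_neg hne]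
          norm_num
        · intro habs
          exact absurd (aux_single_mem i) habs

theorem aux_part2_stmt6 (r m : ℕ) (hr : 0 < r) (hm : 0 < m)
    (a : (Fin r → ℕ) → Fin r → ℝ) (b : Fin r → Fin r → ℝ)
    (h : ∀ x : Fin r → ℝ, (∀ i, 0 ≤ x i) → 0 < ∑ i, x i → ∀ j,
      ∑ k ∈ Finset.Nat.antidiagonalTuple r m,
        a k j * ((Nat.multinomial Finset.univ k : ℝ) * (∏ i, x i ^ k i) / (∑ i, x i) ^ m)
        = (1 / ∑ i, x i) * ∑ i, x i * b i j) :
    ∀ k ∈ Finset.Nat.antidiagonalTuple r m, ∀ j,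
        a k j = ∑ i, (k i : ℝ) / m * b i j := by
  classical
  intro k hk j
  have hksum : ∑ i, k i = m := Finset.Nat.mem_antidiagonalTuple.mp hk
  set Δ := Finset.Nat.antidiagonalTuple r m with hΔ
  set P : MvPolynomial (Fin r) ℝ :=
    ∑ k' ∈ Δ, MvPolynomial.C ((Nat.multinomial Finset.univ k' : ℝ) * a k' j)
      * ∏ i, MvPolynomial.X i ^ k' i with hP
  set L : MvPolynomial (Fin r) ℝ := ∑ i, MvPolynomial.C (b i j) * MvPolynomial.X i with hL
  set B : MvPolynomial (Fin r) ℝ := (∑ i, MvPolynomial.X i) ^ (m - 1) with hB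
  have hvan : P - L * B = 0 := by
    apply aux_vanish
    intro x hx
    rw [map_sub, sub_eq_zero]
    have hevP : MvPolynomial.eval x P
        = ∑ k' ∈ Δ, (Nat.multinomial Finset.univ k' : ℝ) * a k' j * ∏ i, x i ^ k' i := by
      rw [hP, map_sum]
      refine Finset.sum_congr rfl fun k' _ => ?_
      simp
    have hevL : MvPolynomial.eval x L = ∑ i, b i j * x i := by
      rw [hL, map_sum]; simp
    have hevB : MvPolynomial.eval x B = (∑ i, x i) ^ (m - 1) := by
      rw [hB]; simp
    rw [hevP, map_mul, hevL, hevB]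
    by_cases hT : ∑ i, x i = 0
    · have hx0 : ∀ i, x i = 0 := fun i =>
        (Finset.sum_eq_zero_iff_of_nonneg (fun i _ => hx i)).mp hT i (Finset.mem_univ i)
      rw [Finset.sum_eq_zero, Finset.sum_eq_zero (fun i _ => by rw [hx0 i, mul_zero]), zero_mul]
      intro k' hk'
      have hk'sum : ∑ i, k' i = m := Finset.Nat.mem_antidiagonalTuple.mp hk'
      have : ∃ i, k' i ≠ 0 := by
        by_contra hc
        push_neg at hc
        simp [hc] at hk'sum
        omega
      obtain ⟨i, hi⟩ := this
      rw [Finset.prod_eq_zero (Finset.mem_univ i) (by rw [hx0 i]; exact zero_pow hi), mul_zero]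
    · have hT' : 0 < ∑ i, x i :=
        lt_of_le_of_ne (Finset.sum_nonneg fun i _ => hx i) (Ne.symm hT)
      have hh := h x hx hT' j
      have e1 : ∑ k' ∈ Δ, (Nat.multinomial Finset.univ k' : ℝ) * a k' j * ∏ i, x i ^ k' i
          = (∑ k' ∈ Δ, a k' j * ((Nat.multinomial Finset.univ k' : ℝ) * (∏ i, x i ^ k' i)
              / (∑ i, x i) ^ m)) * (∑ i, x i) ^ m := by
        rw [Finset.sum_mul]
        refine Finset.sum_congr rfl fun k' _ => ?_
        have : (∑ i, x i) ^ m ≠ 0 := pow_ne_zero _ hT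
        field_simp
      rw [e1, hh]
      rw [show m = (m - 1) + 1 from by omega, pow_succ]
      rw [show ∑ i, b i j * x i = ∑ i, x i * b i j from Finset.sum_congr rfl fun i _ => mul_comm _ _]
      field_simp
      rw [Nat.add_sub_cancel]
  -- coefficient extraction
  have hco := congrArg (MvPolynomial.coeff (Finsupp.equivFunOnFinite.symm k)) hvan
  rw [MvPolynomial.coeff_sub, MvPolynomial.coeff_zero, sub_eq_zero] at hco
  have hcP : MvPolynomial.coeff (Finsupp.equivFunOnFinite.symm k) P
      = (Nat.multinomial Finset.univ k : ℝ) * a k j := by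
    rw [hP]
    simp_rw [aux_mono]
    rw [MvPolynomial.coeff_sum]
    simp_rw [MvPolynomial.coeff_monomial]
    rw [Finset.sum_eq_single k]
    · rw [if_pos rfl]
    · intro k' _ hne
      rw [if_neg fun hc => hne (Finsupp.equivFunOnFinite.symm.injective hc)]
    · intro habs
      exact absurd hk habs
  have hterm : ∀ i, (if i ∈ (Finsupp.equivFunOnFinite.symm k).support
        then MvPolynomial.coeff (Finsupp.equivFunOnFinite.symm k - Finsupp.single i 1) B else 0)
      = (Nat.multinomial Finset.univ k : ℝ) * ((k i : ℝ) / m) := by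
    intro i
    by_cases hki : k i = 0
    · rw [if_neg (fun hmem => (Finsupp.mem_support_iff.mp hmem) hki), hki]
      simp
    · rw [if_pos (Finsupp.mem_support_iff.mpr hki)]
      rw [hB, aux_coeff_pow]
      have hsub : (Finsupp.equivFunOnFinite.symm k - Finsupp.single i 1)
          = Finsupp.equivFunOnFinite.symm (Function.update k i (k i - 1)) := by
        ext l
        rw [Finsupp.tsub_apply]
        by_cases hl : l = i
        · subst hl
          rw [Finsupp.single_eq_same]
          show k l - 1 = Function.update k l (k l - 1) l
          rw [Function.update_self]
        · rw [Finsupp.single_eq_of_ne hl]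
          show k l - 0 = Function.update k i (k i - 1) l
          rw [Function.update_of_ne hl]
          omega
      rw [hsub]
      rw [show ⇑(Finsupp.equivFunOnFinite.symm (Function.update k i (k i - 1)))
          = Function.update k i (k i - 1) from rfl]
      have hsum : ∑ l, Function.update k i (k i - 1) l = m - 1 := by
        have h2 : ∑ l, Function.update k i (k i - 1) l
            = (k i - 1) + ∑ l ∈ Finset.univ.erase i, k l := by
          rw [← Finset.add_sum_erase _ _ (Finset.mem_univ i), Function.update_self]
          congr 1
          exact Finset.sum_congr rfl fun l hl =>
            Function.update_of_ne (Finset.mem_erase.mp hl).1 _ k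
        have h3 : k i + ∑ l ∈ Finset.univ.erase i, k l = m := by
          rw [Finset.add_sum_erase _ k (Finset.mem_univ i)]
          exact hksum
        have h1 : 1 ≤ k i := Nat.one_le_iff_ne_zero.mpr hki
        omega
      rw [if_pos hsum]
      -- cast identity
      have hrec := aux_mult_rec k i hki
      rw [hksum] at hrec
      have hm0 : (m : ℝ) ≠ 0 := Nat.cast_ne_zero.mpr hm.ne'
      have : (m : ℝ) * (Nat.multinomial Finset.univ (Function.update k i (k i - 1)) : ℝ)
          = (k i : ℝ) * (Nat.multinomial Finset.univ k : ℝ) := by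
        exact_mod_cast congrArg (Nat.cast (R := ℝ)) hrec
      field_simp
      linarith [this]
  have hcLB : MvPolynomial.coeff (Finsupp.equivFunOnFinite.symm k) (L * B)
      = (Nat.multinomial Finset.univ k : ℝ) * ∑ i, (k i : ℝ) / m * b i j := by
    rw [hL, Finset.sum_mul]
    simp_rw [mul_assoc]
    rw [MvPolynomial.coeff_sum]
    simp_rw [MvPolynomial.coeff_C_mul, MvPolynomial.coeff_X_mul', hterm]
    rw [Finset.mul_sum]
    exact Finset.sum_congr rfl fun i _ => by ring
  rw [hcP, hcLB] at hco
  have hmne : (Nat.multinomial Finset.univ k : ℝ) ≠ 0 :=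
    Nat.cast_ne_zero.mpr (Nat.multinomial_pos _ _).ne'
  exact mul_left_cancel₀ hmne hco

end auxStmt6

/-- Necessity of the linearity condition under multinomial sampling (model R). -/
theorem stmt6 (r m : ℕ) (hr : 0 < r) (hm : 0 < m)
    (a : (Fin r → ℕ) → Fin r → ℝ) (b : Fin r → Fin r → ℝ)
    (h : ∀ x : Fin r → ℝ, (∀ i, 0 ≤ x i) → 0 < ∑ i, x i → ∀ j,
      ∑ k ∈ Finset.Nat.antidiagonalTuple r m,
        a k j * ((Nat.multinomial Finset.univ k : ℝ) * (∏ i, x i ^ k i) / (∑ i, x i) ^ m)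
        = (1 / ∑ i, x i) * ∑ i, x i * b i j) :
    (∀ i, b i = a (Pi.single i m)) ∧
      ∀ k ∈ Finset.Nat.antidiagonalTuple r m, ∀ j,
        a k j = ∑ i, (k i : ℝ) / m * a (Pi.single i m) j := by
  have h1 := aux_part1_stmt6 r m hr hm a b h
  refine ⟨h1, fun k hk j => ?_⟩
  rw [aux_part2_stmt6 r m hr hm a b h k hk j]
  exact Finset.sum_congr rfl fun i _ => by rw [h1 i]
end

section
/- Suppose the ordered-sample replacement vectors (a_d)_{d∈S} satisfy, for every k ∈ Δ, Σ_{d : j(d)=k} a_d = Σ_{i=1}^r C(m-1; k - e_i) · a_{i·1} (where i·1 = (i,i,...,i) is the constant sequence and terms with k_i = 0 are omitted). Then for ordered sampling with replacement (model R_SEQ), with weights x = (x_1,...,x_r), T = Σ x_i > 0: Σ_{d∈S} a_d · x^{j(d)} / T^m = (1/T) Σ_{i=1}^r x_i · a_{i·1}. -/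
open Finset

/-- Key step: summing the shifted multinomial coefficients times monomials over the
antidiagonal gives `x i * (∑ x) ^ (m-1)`. -/
lemma stmt16_aux (r m : ℕ) (hm : 1 ≤ m) (x : Fin r → ℝ) (i : Fin r) :
    ∑ k ∈ Finset.Nat.antidiagonalTuple r m,
      (if 1 ≤ k i then
          (Nat.multinomial Finset.univ (Function.update k i (k i - 1)) : ℝ)
        else 0) * ∏ ℓ, x ℓ ^ k ℓ
      = x i * (∑ l, x l) ^ (m - 1) := by
  classical
  rw [Finset.sum_pow_eq_sum_piAntidiag, Finset.mul_sum]
  simp_rw [ite_mul, zero_mul]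
  rw [← Finset.sum_filter]
  refine Finset.sum_bij' (fun k _ => Function.update k i (k i - 1))
    (fun k _ => Function.update k i (k i + 1)) ?_ ?_ ?_ ?_ ?_
  · intro k hk
    rw [Finset.mem_filter, Finset.Nat.mem_antidiagonalTuple] at hk
    obtain ⟨hsum, hki⟩ := hk
    rw [Finset.mem_piAntidiag]
    refine ⟨?_, fun _ _ => Finset.mem_univ _⟩
    rw [Finset.sum_update_of_mem (Finset.mem_univ i), Finset.sdiff_singleton_eq_erase]
    rw [← Finset.sum_erase_add _ _ (Finset.mem_univ i)] at hsum
    omega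
  · intro k hk
    rw [Finset.mem_piAntidiag] at hk
    obtain ⟨hsum, -⟩ := hk
    rw [Finset.mem_filter, Finset.Nat.mem_antidiagonalTuple]
    constructor
    · rw [Finset.sum_update_of_mem (Finset.mem_univ i), Finset.sdiff_singleton_eq_erase]
      rw [← Finset.sum_erase_add _ _ (Finset.mem_univ i)] at hsum
      omega
    · simp
  · intro k hk
    rw [Finset.mem_filter] at hk
    have h1 : k i - 1 + 1 = k i := by omega
    simp [Function.update_idem, h1]
  · intro k hk
    simp [Function.update_idem]
  · intro k hk
    rw [Finset.mem_filter, Finset.Nat.mem_antidiagonalTuple] at hk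
    obtain ⟨hsum, hki⟩ := hk
    have hprod : ∏ ℓ, x ℓ ^ k ℓ = x i * ∏ ℓ, x ℓ ^ (Function.update k i (k i - 1)) ℓ := by
      rw [← Finset.mul_prod_erase Finset.univ _ (Finset.mem_univ i),
        ← Finset.mul_prod_erase Finset.univ
          (fun ℓ => x ℓ ^ (Function.update k i (k i - 1)) ℓ) (Finset.mem_univ i)]
      have hE : ∏ ℓ ∈ Finset.univ.erase i, x ℓ ^ (Function.update k i (k i - 1)) ℓ
          = ∏ ℓ ∈ Finset.univ.erase i, x ℓ ^ k ℓ :=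
        Finset.prod_congr rfl fun ℓ hℓ => by
          rw [Function.update_of_ne (Finset.ne_of_mem_erase hℓ)]
      rw [hE, Function.update_self]
      have : x i ^ k i = x i * x i ^ (k i - 1) := by
        conv_lhs => rw [show k i = (k i - 1) + 1 by omega]
        rw [pow_succ]; ring
      rw [this]; ring
    rw [hprod]; ring

/-- Sufficiency of the linearity condition for ordered samples with replacement
(model R_SEQ). -/
theorem stmt16 (r m : ℕ) (hm : 1 ≤ m)
    (a : (Fin m → Fin r) → Fin r → ℝ)
    (hlin : ∀ k ∈ Finset.Nat.antidiagonalTuple r m, ∀ j,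
      ∑ d ∈ Finset.univ.filter (fun d : Fin m → Fin r =>
          ∀ ℓ, (Finset.univ.filter fun i => d i = ℓ).card = k ℓ), a d j
        = ∑ i, (if 1 ≤ k i then
            (Nat.multinomial Finset.univ (Function.update k i (k i - 1)) : ℝ)
          else 0) * a (fun _ => i) j)
    (x : Fin r → ℝ) (hx : ∀ i, 0 ≤ x i) (T : ℝ) (hT : T = ∑ i, x i)
    (hTpos : 0 < T) (j : Fin r) :
    ∑ d : Fin m → Fin r,
      a d j * ((∏ ℓ, x ℓ ^ (Finset.univ.filter fun i => d i = ℓ).card) / T ^ m)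
      = (1 / T) * ∑ i, x i * a (fun _ => i) j := by
  classical
  set cnt : (Fin m → Fin r) → Fin r → ℕ :=
    fun d ℓ => (Finset.univ.filter fun i => d i = ℓ).card with hcnt
  have hmaps : ∀ d : Fin m → Fin r, cnt d ∈ Finset.Nat.antidiagonalTuple r m := by
    intro d
    rw [Finset.Nat.mem_antidiagonalTuple]
    have := Finset.card_eq_sum_card_fiberwise
      (f := d) (s := Finset.univ) (t := Finset.univ) (fun x _ => Finset.mem_univ _)
    simpa [hcnt] using this.symm
  have key : ∑ d : Fin m → Fin r, a d j * ∏ ℓ, x ℓ ^ cnt d ℓ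
      = ∑ i, x i * a (fun _ => i) j * T ^ (m - 1) := by
    rw [← Finset.sum_fiberwise_of_maps_to (g := cnt) (fun d _ => hmaps d)
      (f := fun d => a d j * ∏ ℓ, x ℓ ^ cnt d ℓ)]
    have step : ∀ k ∈ Finset.Nat.antidiagonalTuple r m,
        ∑ d ∈ Finset.univ.filter fun d => cnt d = k, a d j * ∏ ℓ, x ℓ ^ cnt d ℓ
        = (∑ i, (if 1 ≤ k i then
            (Nat.multinomial Finset.univ (Function.update k i (k i - 1)) : ℝ)
          else 0) * a (fun _ => i) j) * ∏ ℓ, x ℓ ^ k ℓ := by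
      intro k hk
      have hfe : (Finset.univ.filter fun d : Fin m → Fin r => cnt d = k)
          = Finset.univ.filter (fun d : Fin m → Fin r => ∀ ℓ, cnt d ℓ = k ℓ) := by
        apply Finset.filter_congr
        intro d _
        simp [funext_iff]
      have : ∑ d ∈ Finset.univ.filter fun d => cnt d = k, a d j * ∏ ℓ, x ℓ ^ cnt d ℓ
          = (∑ d ∈ Finset.univ.filter (fun d : Fin m → Fin r => ∀ ℓ, cnt d ℓ = k ℓ), a d j)
            * ∏ ℓ, x ℓ ^ k ℓ := by
        rw [Finset.sum_mul, hfe]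
        apply Finset.sum_congr rfl
        intro d hd
        rw [Finset.mem_filter] at hd
        have : ∀ ℓ, cnt d ℓ = k ℓ := hd.2
        congr 1
        exact Finset.prod_congr rfl fun ℓ _ => by rw [this ℓ]
      rw [this, hlin k hk j]
    rw [Finset.sum_congr rfl step]
    simp_rw [Finset.sum_mul]
    rw [Finset.sum_comm]
    refine Finset.sum_congr rfl fun i _ => ?_
    have := stmt16_aux r m hm x i
    calc ∑ k ∈ Finset.Nat.antidiagonalTuple r m,
          ((if 1 ≤ k i then
              (Nat.multinomial Finset.univ (Function.update k i (k i - 1)) : ℝ)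
            else 0) * a (fun _ => i) j) * ∏ ℓ, x ℓ ^ k ℓ
        = a (fun _ => i) j * ∑ k ∈ Finset.Nat.antidiagonalTuple r m,
            (if 1 ≤ k i then
              (Nat.multinomial Finset.univ (Function.update k i (k i - 1)) : ℝ)
            else 0) * ∏ ℓ, x ℓ ^ k ℓ := by
          rw [Finset.mul_sum]; exact Finset.sum_congr rfl fun k _ => by ring
      _ = a (fun _ => i) j * (x i * (∑ l, x l) ^ (m - 1)) := by rw [this]
      _ = x i * a (fun _ => i) j * T ^ (m - 1) := by rw [← hT]; ring
  have hTm : T ^ m = T ^ (m - 1) * T := by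
    conv_lhs => rw [show m = (m - 1) + 1 by omega]
    rw [pow_succ]
  have hTne : T ≠ 0 := ne_of_gt hTpos
  have hTpow : T ^ (m - 1) ≠ 0 := pow_ne_zero _ hTne
  calc ∑ d : Fin m → Fin r, a d j * ((∏ ℓ, x ℓ ^ cnt d ℓ) / T ^ m)
      = (∑ d : Fin m → Fin r, a d j * ∏ ℓ, x ℓ ^ cnt d ℓ) / T ^ m := by
        rw [Finset.sum_div]; exact Finset.sum_congr rfl fun d _ => by ring
    _ = (∑ i, x i * a (fun _ => i) j * T ^ (m - 1)) / (T ^ (m - 1) * T) := by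
        rw [key, hTm]
    _ = ((∑ i, x i * a (fun _ => i) j) * T ^ (m - 1)) / (T ^ (m - 1) * T) := by
        rw [Finset.sum_mul]
    _ = (1 / T) * ∑ i, x i * a (fun _ => i) j := by
        field_simp
end

section
/- Under the same condition Σ_{d : j(d)=k} a_d = Σ_{i=1}^r C(m-1; k-e_i)·a_{i·1} for all k ∈ Δ, for ordered sampling without replacement (model M_SEQ) with x_i ≥ 0 integers and T = Σ x_i ≥ m: Σ_{d∈S} a_d · (x_1)_{j_1(d)}⋯(x_r)_{j_r(d)} / (T)_m = (1/T) Σ_{i=1}^r x_i · a_{i·1}. -/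
open Finset

private lemma desc_succ' (x k : ℕ) :
    x.descFactorial (k + 1) = x * (x - 1).descFactorial k := by
  cases x with
  | zero => simp
  | succ n => rw [Nat.succ_descFactorial_succ]; simp

/-- Multivariate Vandermonde for binomial coefficients. -/
private lemma vand : ∀ (r : ℕ) (n : ℕ) (x : Fin r → ℕ),
    ∑ k ∈ Finset.Nat.antidiagonalTuple r n, ∏ ℓ, (x ℓ).choose (k ℓ)
      = (∑ ℓ, x ℓ).choose n
  | 0, n, x => by
    cases n with
    | zero => simp
    | succ n => simp
  | (r+1), n, x => by
    have hsplit : ∑ k ∈ Finset.Nat.antidiagonalTuple (r+1) n, ∏ ℓ, (x ℓ).choose (k ℓ)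
        = ∑ p ∈ Finset.HasAntidiagonal.antidiagonal n, ∑ k ∈ Finset.Nat.antidiagonalTuple r p.2,
            ∏ ℓ, (x ℓ).choose ((Fin.cons p.1 k : Fin (r+1) → ℕ) ℓ) := by
      rw [Finset.sum_sigma']
      refine Finset.sum_nbij'
        (fun k => ⟨(k 0, ∑ i : Fin r, k (Fin.succ i)), fun i => k (Fin.succ i)⟩)
        (fun b => Fin.cons b.1.1 b.2) ?_ ?_ ?_ ?_ ?_
      · intro k hk
        rw [Finset.Nat.mem_antidiagonalTuple] at hk
        refine Finset.mem_sigma.mpr ⟨Finset.HasAntidiagonal.mem_antidiagonal.mpr ?_,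
          Finset.Nat.mem_antidiagonalTuple.mpr rfl⟩
        rw [← hk, Fin.sum_univ_succ]
      · rintro ⟨⟨p1, p2⟩, k⟩ hk
        simp only [Finset.mem_sigma, Finset.HasAntidiagonal.mem_antidiagonal,
          Finset.Nat.mem_antidiagonalTuple] at hk ⊢
        rw [Fin.sum_cons, hk.2, hk.1]
      · intro k hk
        exact funext fun i => Fin.cases rfl (fun j => rfl) i
      · rintro ⟨⟨p1, p2⟩, k⟩ hk
        simp only [Finset.mem_sigma, Finset.HasAntidiagonal.mem_antidiagonal,
          Finset.Nat.mem_antidiagonalTuple] at hk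
        refine Sigma.ext ?_ (heq_of_eq (funext fun i => by simp))
        simp [hk.2]
      · intro k hk
        refine Finset.prod_congr rfl fun ℓ _ => ?_
        congr 1
        refine Fin.cases ?_ (fun i => ?_) ℓ <;> simp
    rw [hsplit]
    have : ∀ p ∈ Finset.HasAntidiagonal.antidiagonal n,
        ∑ k ∈ Finset.Nat.antidiagonalTuple r p.2,
            ∏ ℓ, (x ℓ).choose ((Fin.cons p.1 k : Fin (r+1) → ℕ) ℓ)
          = (x 0).choose p.1 * (∑ ℓ : Fin r, x ℓ.succ).choose p.2 := by
      intro p _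
      rw [← vand r p.2 (fun ℓ => x ℓ.succ), Finset.mul_sum]
      refine Finset.sum_congr rfl fun k _ => ?_
      rw [Fin.prod_univ_succ]
      simp
    rw [Finset.sum_congr rfl this, Fin.sum_univ_succ, Nat.add_choose_eq]

/-- Multivariate Vandermonde for falling factorials with multinomial weights. -/
private lemma keyN (r n : ℕ) (y : Fin r → ℕ) :
    ∑ k ∈ Finset.Nat.antidiagonalTuple r n,
        Nat.multinomial Finset.univ k * ∏ ℓ, (y ℓ).descFactorial (k ℓ)
      = (∑ ℓ, y ℓ).descFactorial n := by
  rw [Nat.descFactorial_eq_factorial_mul_choose, ← vand, Finset.mul_sum]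
  refine Finset.sum_congr rfl fun k hk => ?_
  have hsum : ∑ i, k i = n := Finset.Nat.mem_antidiagonalTuple.mp hk
  have h1 : ∀ ℓ : Fin r, (y ℓ).descFactorial (k ℓ)
      = Nat.factorial (k ℓ) * (y ℓ).choose (k ℓ) :=
    fun ℓ => Nat.descFactorial_eq_factorial_mul_choose _ _
  calc Nat.multinomial Finset.univ k * ∏ ℓ, (y ℓ).descFactorial (k ℓ)
      = Nat.multinomial Finset.univ k *
          ((∏ ℓ, Nat.factorial (k ℓ)) * ∏ ℓ, (y ℓ).choose (k ℓ)) := by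
        rw [← Finset.prod_mul_distrib]
        exact congrArg _ (Finset.prod_congr rfl fun ℓ _ => h1 ℓ)
    _ = ((∏ ℓ, Nat.factorial (k ℓ)) * Nat.multinomial Finset.univ k)
          * ∏ ℓ, (y ℓ).choose (k ℓ) := by
        ring
    _ = Nat.factorial n * ∏ ℓ, (y ℓ).choose (k ℓ) := by
        rw [Nat.multinomial_spec, hsum]

private lemma sum_update_sub (r : ℕ) (x : Fin r → ℕ) (i : Fin r) (hx : 0 < x i) :
    ∑ ℓ, Function.update x i (x i - 1) ℓ = (∑ ℓ, x ℓ) - 1 := by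
  rw [Finset.sum_update_of_mem (Finset.mem_univ i)]
  have hthis := Finset.add_sum_erase Finset.univ x (Finset.mem_univ i)
  simp only [Finset.sdiff_singleton_eq_erase]
  omega

/-- The inner sum over count vectors, evaluated in ℕ. -/
private lemma innerN (r m : ℕ) (hm : 1 ≤ m) (x : Fin r → ℕ) (i : Fin r) :
    ∑ k ∈ Finset.Nat.antidiagonalTuple r m,
        (if 1 ≤ k i then Nat.multinomial Finset.univ (Function.update k i (k i - 1)) else 0)
          * ∏ ℓ, (x ℓ).descFactorial (k ℓ)
      = x i * ((∑ ℓ, x ℓ) - 1).descFactorial (m - 1) := by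
  obtain ⟨m', rfl⟩ : ∃ m', m = m' + 1 := ⟨m - 1, by omega⟩
  simp only [Nat.add_sub_cancel]
  have hstep : ∑ k ∈ Finset.Nat.antidiagonalTuple r (m'+1),
      (if 1 ≤ k i then Nat.multinomial Finset.univ (Function.update k i (k i - 1)) else 0)
        * ∏ ℓ, (x ℓ).descFactorial (k ℓ)
      = ∑ k' ∈ Finset.Nat.antidiagonalTuple r m',
          Nat.multinomial Finset.univ k'
            * ∏ ℓ, (x ℓ).descFactorial ((Function.update k' i (k' i + 1)) ℓ) := by
    have : ∀ k ∈ Finset.Nat.antidiagonalTuple r (m'+1),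
        (if 1 ≤ k i then Nat.multinomial Finset.univ (Function.update k i (k i - 1)) else 0)
          * ∏ ℓ, (x ℓ).descFactorial (k ℓ)
        = if 1 ≤ k i then
            Nat.multinomial Finset.univ (Function.update k i (k i - 1))
              * ∏ ℓ, (x ℓ).descFactorial (k ℓ) else 0 := by
      intro k _; split <;> simp
    rw [Finset.sum_congr rfl this, ← Finset.sum_filter]
    refine Finset.sum_nbij' (fun k => Function.update k i (k i - 1))
      (fun k' => Function.update k' i (k' i + 1)) ?_ ?_ ?_ ?_ ?_
    · intro k hk
      simp only [Finset.mem_filter, Finset.Nat.mem_antidiagonalTuple] at hk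
      simp only [Finset.Nat.mem_antidiagonalTuple]
      rw [Finset.sum_update_of_mem (Finset.mem_univ i)]
      have hthis := Finset.add_sum_erase Finset.univ k (Finset.mem_univ i)
      rw [hk.1] at hthis
      have h1 : 1 ≤ k i := hk.2
      simp only [Finset.sdiff_singleton_eq_erase]
      omega
    · intro k' hk'
      rw [Finset.Nat.mem_antidiagonalTuple] at hk'
      simp only [Finset.mem_filter, Finset.Nat.mem_antidiagonalTuple]
      constructor
      · rw [Finset.sum_update_of_mem (Finset.mem_univ i)]
        have hthis := Finset.add_sum_erase Finset.univ k' (Finset.mem_univ i)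
        rw [hk'] at hthis
        simp only [Finset.sdiff_singleton_eq_erase]
        omega
      · rw [Function.update_self]; omega
    · intro k hk
      simp only [Finset.mem_filter] at hk
      show Function.update (Function.update k i (k i - 1)) i
          (Function.update k i (k i - 1) i + 1) = k
      simp only [Function.update_idem, Function.update_self]
      rw [Nat.sub_add_cancel hk.2, Function.update_eq_self]
    · intro k' hk'
      show Function.update (Function.update k' i (k' i + 1)) i
          (Function.update k' i (k' i + 1) i - 1) = k'
      simp only [Function.update_idem, Function.update_self, Nat.add_sub_cancel]
      rw [Function.update_eq_self]
    · intro k hk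
      simp only [Finset.mem_filter] at hk
      have h2 : Function.update (Function.update k i (k i - 1)) i
          (Function.update k i (k i - 1) i + 1) = k := by
        simp only [Function.update_idem, Function.update_self]
        rw [Nat.sub_add_cancel hk.2, Function.update_eq_self]
      simp only [h2]
  rw [hstep]
  have hprod : ∀ k' : Fin r → ℕ,
      ∏ ℓ, (x ℓ).descFactorial ((Function.update k' i (k' i + 1)) ℓ)
        = x i * ∏ ℓ, ((Function.update x i (x i - 1)) ℓ).descFactorial (k' ℓ) := by
    intro k'
    rw [← Finset.mul_prod_erase Finset.univ _ (Finset.mem_univ i),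
        ← Finset.mul_prod_erase Finset.univ
          (fun ℓ => ((Function.update x i (x i - 1)) ℓ).descFactorial (k' ℓ))
          (Finset.mem_univ i)]
    rw [Function.update_self, Function.update_self, desc_succ', ← mul_assoc]
    congr 1
    refine Finset.prod_congr rfl fun ℓ hℓ => ?_
    have hne : ℓ ≠ i := (Finset.mem_erase.mp hℓ).1
    rw [Function.update_of_ne hne, Function.update_of_ne hne]
  have : ∑ k' ∈ Finset.Nat.antidiagonalTuple r m',
      Nat.multinomial Finset.univ k'
        * ∏ ℓ, (x ℓ).descFactorial ((Function.update k' i (k' i + 1)) ℓ)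
      = x i * ∑ k' ∈ Finset.Nat.antidiagonalTuple r m',
          Nat.multinomial Finset.univ k'
            * ∏ ℓ, ((Function.update x i (x i - 1)) ℓ).descFactorial (k' ℓ) := by
    rw [Finset.mul_sum]
    refine Finset.sum_congr rfl fun k' _ => ?_
    rw [hprod]; ring
  rw [this, keyN]
  rcases Nat.eq_zero_or_pos (x i) with hx | hx
  · rw [hx]; ring
  · rw [sum_update_sub r x i hx]

/-- Sufficiency of the linearity condition for ordered samples without replacement
(model M_SEQ). -/
theorem stmt17 (r m : ℕ) (hm : 1 ≤ m)
    (a : (Fin m → Fin r) → Fin r → ℝ)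
    (hlin : ∀ k ∈ Finset.Nat.antidiagonalTuple r m, ∀ j,
      ∑ d ∈ Finset.univ.filter (fun d : Fin m → Fin r =>
          ∀ ℓ, (Finset.univ.filter fun i => d i = ℓ).card = k ℓ), a d j
        = ∑ i, (if 1 ≤ k i then
            (Nat.multinomial Finset.univ (Function.update k i (k i - 1)) : ℝ)
          else 0) * a (fun _ => i) j)
    (x : Fin r → ℕ) (T : ℕ) (hT : T = ∑ i, x i) (hTm : m ≤ T) (j : Fin r) :
    ∑ d : Fin m → Fin r,
      a d j * ((∏ ℓ, ((x ℓ).descFactorial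
          ((Finset.univ.filter fun i => d i = ℓ).card) : ℝ)) /
        (T.descFactorial m : ℝ))
      = (1 / (T : ℝ)) * ∑ i, (x i : ℝ) * a (fun _ => i) j := by
  classical
  set c : (Fin m → Fin r) → (Fin r → ℕ) :=
    fun d ℓ => (Finset.univ.filter fun i => d i = ℓ).card with hc
  have hmaps : ∀ d ∈ (Finset.univ : Finset (Fin m → Fin r)),
      c d ∈ Finset.Nat.antidiagonalTuple r m := by
    intro d _
    rw [Finset.Nat.mem_antidiagonalTuple]
    rw [← Finset.card_eq_sum_card_fiberwise (f := d) (t := Finset.univ)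
      (fun i _ => Finset.mem_univ _)]
    simp
  have hgroup := Finset.sum_fiberwise_of_maps_to (g := c) hmaps
    (fun d => a d j * ((∏ ℓ, ((x ℓ).descFactorial (c d ℓ) : ℝ)) / (T.descFactorial m : ℝ)))
  rw [← hgroup]
  have hfiber : ∀ k ∈ Finset.Nat.antidiagonalTuple r m,
      ∑ d ∈ Finset.univ.filter (fun d => c d = k),
          a d j * ((∏ ℓ, ((x ℓ).descFactorial (c d ℓ) : ℝ)) / (T.descFactorial m : ℝ))
        = ∑ i, ((if 1 ≤ k i then
            (Nat.multinomial Finset.univ (Function.update k i (k i - 1)) : ℝ) else 0)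
            * ((∏ ℓ, ((x ℓ).descFactorial (k ℓ) : ℝ)) / (T.descFactorial m : ℝ)))
            * a (fun _ => i) j := by
    intro k hk
    have h1 : ∑ d ∈ Finset.univ.filter (fun d => c d = k),
        a d j * ((∏ ℓ, ((x ℓ).descFactorial (c d ℓ) : ℝ)) / (T.descFactorial m : ℝ))
        = (∑ d ∈ Finset.univ.filter (fun d => c d = k), a d j)
            * ((∏ ℓ, ((x ℓ).descFactorial (k ℓ) : ℝ)) / (T.descFactorial m : ℝ)) := by
      rw [Finset.sum_mul]
      refine Finset.sum_congr rfl fun d hd => ?_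
      have : c d = k := (Finset.mem_filter.mp hd).2
      rw [this]
    rw [h1]
    have hfilter : Finset.univ.filter (fun d : Fin m → Fin r => c d = k)
        = Finset.univ.filter (fun d : Fin m → Fin r =>
            ∀ ℓ, (Finset.univ.filter fun i => d i = ℓ).card = k ℓ) := by
      refine Finset.filter_congr fun d _ => ?_
      simp [hc, funext_iff]
    rw [hfilter, hlin k hk j, Finset.sum_mul]
    refine Finset.sum_congr rfl fun i _ => ?_
    ring
  rw [Finset.sum_congr rfl hfiber, Finset.sum_comm]
  have hT1 : (1:ℕ) ≤ T := le_trans hm hTm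
  have hinner : ∀ i : Fin r,
      ∑ k ∈ Finset.Nat.antidiagonalTuple r m,
        ((if 1 ≤ k i then
            (Nat.multinomial Finset.univ (Function.update k i (k i - 1)) : ℝ) else 0)
          * ((∏ ℓ, ((x ℓ).descFactorial (k ℓ) : ℝ)) / (T.descFactorial m : ℝ)))
          * a (fun _ => i) j
        = ((x i * (T - 1).descFactorial (m - 1) : ℕ) : ℝ) / (T.descFactorial m : ℝ)
            * a (fun _ => i) j := by
    intro i
    rw [← Finset.sum_mul]
    congr 1
    have hIN := innerN r m hm x i
    rw [← hT] at hIN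
    rw [← hIN, Nat.cast_sum, Finset.sum_div]
    refine Finset.sum_congr rfl fun k _ => ?_
    push_cast
    split <;> simp [mul_div_assoc]
  rw [Finset.sum_congr rfl fun i _ => hinner i]
  have hdesc : T.descFactorial m = T * (T - 1).descFactorial (m - 1) := by
    obtain ⟨m', rfl⟩ : ∃ m', m = m' + 1 := ⟨m - 1, by omega⟩
    obtain ⟨t, rfl⟩ : ∃ t, T = t + 1 := ⟨T - 1, by omega⟩
    simp only [Nat.add_sub_cancel]
    exact Nat.succ_descFactorial_succ t m'
  have hdpos : (0:ℝ) < ((T - 1).descFactorial (m - 1) : ℕ) := by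
    have : ¬ (T - 1 < m - 1) := by omega
    have := mt Nat.descFactorial_eq_zero_iff_lt.mp this
    positivity
  have hTpos : (0:ℝ) < (T:ℝ) := by exact_mod_cast hT1
  rw [Finset.mul_sum]
  refine Finset.sum_congr rfl fun i _ => ?_
  rw [hdesc]
  push_cast
  field_simp
end
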